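/- Hard look-ahead strengthening is not monotone: there exist syntactic protocols Q ⊆ P and an initial gossip graph G with Q^■(G) ⊄ P^■(G). Concretely, let G be the 'spaceship' graph on agents {0,1,2,3} with N the reflexive closure of {(0,1),(3,1),(1,2)} and S the identity, let P = LNS and Q = LNS^♦ (the soft look-ahead strengthening of LNS). Then Q ⊆ P, yet (LNS^♦)^■(G) = LNS^♦(G) (since LNS^♦ is strongly successful on G, hard look-ahead strengthening does not change it) whereas LNS^■(G) contains no sequence of length greater than 1; in particular the sequence 01;31;12;02;32 belongs to (LNS^♦)^■(G) but not to LNS^■(G), so (LNS^♦)^■(G) ⊄ LNS^■(G). -/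

import Mathlib

set_option maxHeartbeats 1000000

structure GossipGraph (A : Type) : Type where
  N : A → A → Prop
  S : A → A → Prop
  refl_S : ∀ a, S a a
  S_sub_N : ∀ a b, S a b → N a b

namespace Gossip

variable {A : Type}

def Initial (G : GossipGraph A) : Prop := ∀ a b, G.S a b ↔ a = b

def doCall (G : GossipGraph A) (c : A × A) : GossipGraph A where
  N x y := G.N x y ∨ ((x = c.1 ∨ x = c.2) ∧ (G.N c.1 y ∨ G.N c.2 y))
  S x y := G.S x y ∨ ((x = c.1 ∨ x = c.2) ∧ (G.S c.1 y ∨ G.S c.2 y))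
  refl_S a := Or.inl (G.refl_S a)
  S_sub_N a b h := by
    rcases h with h | ⟨h1, h2 | h2⟩
    · exact Or.inl (G.S_sub_N a b h)
    · exact Or.inr ⟨h1, Or.inl (G.S_sub_N _ _ h2)⟩
    · exact Or.inr ⟨h1, Or.inr (G.S_sub_N _ _ h2)⟩

def doCalls (G : GossipGraph A) (σ : List (A × A)) : GossipGraph A :=
  σ.foldl doCall G

def PossibleSeq (G : GossipGraph A) : List (A × A) → Prop
  | [] => True
  | c :: σ => c.1 ≠ c.2 ∧ G.N c.1 c.2 ∧ PossibleSeq (doCall G c) σ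

mutual
  inductive Form (A : Type) : Type where
    | top : Form A
    | atomN : A → A → Form A
    | atomS : A → A → Form A
    | neg : Form A → Form A
    | conj : Form A → Form A → Form A
    | K : A → (A → A → Form A) → Form A → Form A
    | box : Prog A → Form A → Form A
  inductive Prog (A : Type) : Type where
    | test : Form A → Prog A
    | call : A → A → Prog A
    | seq : Prog A → Prog A → Prog A
    | cup : Prog A → Prog A → Prog A
    | star : Prog A → Prog A
end

abbrev Protocol (A : Type) := A → A → Form A

inductive Epi (G : GossipGraph A) (perm : List (A × A) → (A × A) → Prop) (a : A) :
    List (A × A) → List (A × A) → Prop where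
  | refl : Epi G perm a [] []
  | call_out {σ τ : List (A × A)} {b : A} :
      Epi G perm a σ τ →
      (∀ x, (doCalls G σ).N b x ↔ (doCalls G τ).N b x) →
      (∀ x, (doCalls G σ).S b x ↔ (doCalls G τ).S b x) →
      perm σ (a, b) → perm τ (a, b) →
      Epi G perm a (σ ++ [(a, b)]) (τ ++ [(a, b)])
  | call_in {σ τ : List (A × A)} {b : A} :
      Epi G perm a σ τ →
      (∀ x, (doCalls G σ).N b x ↔ (doCalls G τ).N b x) →
      (∀ x, (doCalls G σ).S b x ↔ (doCalls G τ).S b x) →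
      perm σ (b, a) → perm τ (b, a) →
      Epi G perm a (σ ++ [(b, a)]) (τ ++ [(b, a)])
  | other {σ τ : List (A × A)} {c d e f : A} :
      Epi G perm a σ τ →
      c ≠ a → d ≠ a → e ≠ a → f ≠ a →
      perm σ (c, d) → perm τ (e, f) →
      Epi G perm a (σ ++ [(c, d)]) (τ ++ [(e, f)])

mutual
  def Sat (G : GossipGraph A) : List (A × A) → Form A → Prop
    | _, Form.top => True
    | σ, Form.atomN a b => (doCalls G σ).N a b
    | σ, Form.atomS a b => (doCalls G σ).S a b
    | σ, Form.neg φ => ¬ Sat G σ φ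
    | σ, Form.conj φ ψ => Sat G σ φ ∧ Sat G σ ψ
    | σ, Form.K a P φ =>
        ∀ τ, Epi G (fun ρ c => c.1 ≠ c.2 ∧ (doCalls G ρ).N c.1 c.2 ∧ Sat G ρ (P c.1 c.2)) a τ σ →
          Sat G τ φ
    | σ, Form.box π φ => ∀ τ, ProgRel G π σ τ → Sat G τ φ
  def ProgRel (G : GossipGraph A) : Prog A → List (A × A) → List (A × A) → Prop
    | Prog.test φ, σ, τ => σ = τ ∧ Sat G σ φ
    | Prog.call a b, σ, τ => a ≠ b ∧ (doCalls G σ).N a b ∧ τ = σ ++ [(a, b)]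
    | Prog.seq π π', σ, τ => ∃ ρ, ProgRel G π σ ρ ∧ ProgRel G π' ρ τ
    | Prog.cup π π', σ, τ => ProgRel G π σ τ ∨ ProgRel G π' σ τ
    | Prog.star π, σ, τ => Relation.ReflTransGen (fun x y => ProgRel G π x y) σ τ
end


/-- A call `ab` is `P`-permitted at `(G, σ)` iff `a ≠ b`, `N^σ a b` and `G,σ ⊨ P_{ab}`. -/
def Permits (G : GossipGraph A) (P : Protocol A) (σ : List (A × A)) (c : A × A) : Prop :=
  c.1 ≠ c.2 ∧ (doCalls G σ).N c.1 c.2 ∧ Sat G σ (P c.1 c.2)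

/-- The least set of call sequences containing `ε` and closed under adding permitted calls. -/
inductive Ext (G : GossipGraph A) (perm : List (A × A) → (A × A) → Prop) : List (A × A) → Prop where
  | nil : Ext G perm []
  | snoc {σ : List (A × A)} {c : A × A} : Ext G perm σ → perm σ c → Ext G perm (σ ++ [c])

/-- The extension of a syntactic protocol `P` on an (initial) gossip graph `G`. -/
def extension (P : Protocol A) (G : GossipGraph A) : Set (List (A × A)) :=
  { σ | Ext G (Permits G P) σ }

/-- A formula is valid iff it is true at every gossip state, i.e. at every pair of an
initial gossip graph and a call sequence possible on it. -/
def Valid (φ : Form A) : Prop :=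
  ∀ G : GossipGraph A, Initial G → ∀ σ : List (A × A), PossibleSeq G σ → Sat G σ φ

def impF (φ ψ : Form A) : Form A := Form.neg (Form.conj φ (Form.neg ψ))
def orF (φ ψ : Form A) : Form A := Form.neg (Form.conj (Form.neg φ) (Form.neg ψ))
def iffF (φ ψ : Form A) : Form A := Form.conj (impF φ ψ) (impF ψ φ)
/-- The epistemic "possibility" dual `K̂ := ¬K¬`. -/
def hatK (a : A) (P : Protocol A) (φ : Form A) : Form A := Form.neg (Form.K a P (Form.neg φ))

/-- A semantic protocol, as raw data: a map from (initial) gossip graphs to sets of call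
sequences. -/
abbrev RawSem (A : Type) := GossipGraph A → Set (List (A × A))

/-- For a semantic protocol, a call `c` is permitted at `(G,σ)` iff `σ;c ∈ P(G)`. -/
def semPerm (Q : RawSem A) (G : GossipGraph A) (σ : List (A × A)) (c : A × A) : Prop :=
  σ ++ [c] ∈ Q G

/-- `σ` is terminal (in `Q(G)`) iff no further call is permitted. -/
def TerminalIn (Q : RawSem A) (G : GossipGraph A) (σ : List (A × A)) : Prop :=
  ∀ c : A × A, σ ++ [c] ∉ Q G

/-- All agents are experts: everyone knows all secrets. -/
def AllExpert (G : GossipGraph A) : Prop := ∀ a b : A, G.S a b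

/-- A semantic protocol: assigns to each initial gossip graph a set of call sequences
possible on it, containing the empty sequence and closed under prefixes. -/
structure SemProtocol (A : Type) : Type where
  ext : GossipGraph A → Set (List (A × A))
  nil_mem : ∀ G : GossipGraph A, Initial G → [] ∈ ext G
  prefix_closed : ∀ G : GossipGraph A, Initial G → ∀ σ c, σ ++ [c] ∈ ext G → σ ∈ ext G
  possible : ∀ G : GossipGraph A, Initial G → ∀ σ ∈ ext G, PossibleSeq G σ

/-- A semantic protocol is epistemic iff a call `ab` is permitted at `(G,σ)` exactly when it
is permitted at all states that agent `a` cannot distinguish from `(G,σ)`. -/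
def SemEpistemic (Q : RawSem A) : Prop :=
  ∀ G : GossipGraph A, Initial G → ∀ σ ∈ Q G, ∀ a b : A, a ≠ b →
    (σ ++ [(a, b)] ∈ Q G ↔ ∀ τ, Epi G (semPerm Q G) a τ σ → τ ++ [(a, b)] ∈ Q G)

/-- Relabelling the agents of a gossip graph along a permutation. -/
def mapGraph (J : Equiv.Perm A) (G : GossipGraph A) : GossipGraph A where
  N x y := G.N (J.symm x) (J.symm y)
  S x y := G.S (J.symm x) (J.symm y)
  refl_S a := G.refl_S _
  S_sub_N a b h := G.S_sub_N _ _ h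

/-- Relabelling a call sequence, callwise. -/
def mapSeq (J : Equiv.Perm A) (σ : List (A × A)) : List (A × A) :=
  σ.map (fun c => (J c.1, J c.2))

mutual
  /-- Relabelling the agents in a formula along a permutation. -/
  def mapForm (J : Equiv.Perm A) : Form A → Form A
    | Form.top => Form.top
    | Form.atomN a b => Form.atomN (J a) (J b)
    | Form.atomS a b => Form.atomS (J a) (J b)
    | Form.neg φ => Form.neg (mapForm J φ)
    | Form.conj φ ψ => Form.conj (mapForm J φ) (mapForm J ψ)
    | Form.K a P φ => Form.K (J a) (fun x y => mapForm J (P (J.symm x) (J.symm y))) (mapForm J φ)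
    | Form.box π φ => Form.box (mapProg J π) (mapForm J φ)
  /-- Relabelling the agents in a program along a permutation. -/
  def mapProg (J : Equiv.Perm A) : Prog A → Prog A
    | Prog.test φ => Prog.test (mapForm J φ)
    | Prog.call a b => Prog.call (J a) (J b)
    | Prog.seq π π' => Prog.seq (mapProg J π) (mapProg J π')
    | Prog.cup π π' => Prog.cup (mapProg J π) (mapProg J π')
    | Prog.star π => Prog.star (mapProg J π)
end

/-- A semantic protocol is symmetric iff it commutes with relabelling of the agents. -/
def SemSymmetric (Q : RawSem A) : Prop :=
  ∀ (J : Equiv.Perm A) (G : GossipGraph A), Initial G →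
    Q (mapGraph J G) = mapSeq J '' Q G

def listConj (l : List (Form A)) : Form A := l.foldr Form.conj Form.top
def listDisj (l : List (Form A)) : Form A := l.foldr orF (Form.neg Form.top)

noncomputable def pairsList (A : Type) [Fintype A] : List (A × A) := (Finset.univ : Finset (A × A)).toList
noncomputable def distinctPairs (A : Type) [Fintype A] [DecidableEq A] : List (A × A) :=
  (pairsList A).filter (fun c => decide (c.1 ≠ c.2))

/-- The formula `Ex`: all agents are experts. -/
noncomputable def ExForm (A : Type) [Fintype A] : Form A :=
  listConj ((pairsList A).map (fun c => Form.atomS c.1 c.2))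

/-- `Ex ∨ ⋁_{i≠j} (N_ij ∧ P_ij)`. -/
noncomputable def oneStepBody (A : Type) [Fintype A] [DecidableEq A] (P : Protocol A) : Form A :=
  orF (ExForm A) (listDisj ((distinctPairs A).map (fun c => Form.conj (Form.atomN c.1 c.2) (P c.1 c.2))))

/-- Hard one-step strengthening: `P_ab ∧ K_a^P [ab](Ex ∨ ⋁_{i≠j}(N_ij ∧ P_ij))`. -/
noncomputable def hardOneStep {A : Type} [Fintype A] [DecidableEq A] (P : Protocol A) : Protocol A :=
  fun a b => Form.conj (P a b) (Form.K a P (Form.box (Prog.call a b) (oneStepBody A P)))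

/-- Soft one-step strengthening: `P_ab ∧ K̂_a^P [ab](Ex ∨ ⋁_{i≠j}(N_ij ∧ P_ij))`. -/
noncomputable def softOneStep {A : Type} [Fintype A] [DecidableEq A] (P : Protocol A) : Protocol A :=
  fun a b => Form.conj (P a b) (hatK a P (Form.box (Prog.call a b) (oneStepBody A P)))

/-- The protocol `P` as a program:
`(⋃_{a≠b} ?(N_ab ∧ P_ab);ab)* ; ?⋀_{a≠b} ¬(N_ab ∧ P_ab)`. -/
noncomputable def protProg (A : Type) [Fintype A] [DecidableEq A] (P : Protocol A) : Prog A :=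
  Prog.seq
    (Prog.star (((distinctPairs A).map (fun c =>
      Prog.seq (Prog.test (Form.conj (Form.atomN c.1 c.2) (P c.1 c.2))) (Prog.call c.1 c.2))).foldr
        Prog.cup (Prog.test (Form.neg Form.top))))
    (Prog.test (listConj ((distinctPairs A).map (fun c =>
      Form.neg (Form.conj (Form.atomN c.1 c.2) (P c.1 c.2))))))

/-- Hard look-ahead strengthening: `P_ab ∧ K_a^P [ab]⟨P⟩Ex`. -/
noncomputable def hardLookAhead {A : Type} [Fintype A] [DecidableEq A] (P : Protocol A) : Protocol A :=
  fun a b => Form.conj (P a b)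
    (Form.K a P (Form.box (Prog.call a b)
      (Form.neg (Form.box (protProg A P) (Form.neg (ExForm A))))))

/-- Soft look-ahead strengthening: `P_ab ∧ K̂_a^P [ab]⟨P⟩Ex`. -/
noncomputable def softLookAhead {A : Type} [Fintype A] [DecidableEq A] (P : Protocol A) : Protocol A :=
  fun a b => Form.conj (P a b)
    (hatK a P (Form.box (Prog.call a b)
      (Form.neg (Form.box (protProg A P) (Form.neg (ExForm A))))))

/-- Hard uniform backward defoliation of a semantic protocol. -/
def HUBD (Q : RawSem A) : RawSem A := fun G =>
  { σ | σ ∈ Q G ∧ (σ = [] ∨ ∃ τ : List (A × A), ∃ a b : A, σ = τ ++ [(a, b)] ∧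
      ∀ τ', Epi G (semPerm Q G) a τ' τ →
        (τ' ++ [(a, b)] ∈ Q G ∧ TerminalIn Q G (τ' ++ [(a, b)])) →
          AllExpert (doCalls G (τ' ++ [(a, b)]))) }

/-- Soft uniform backward defoliation of a semantic protocol. -/
def SUBD (Q : RawSem A) : RawSem A := fun G =>
  { σ | σ ∈ Q G ∧ (σ = [] ∨ ∃ τ : List (A × A), ∃ a b : A, σ = τ ++ [(a, b)] ∧
      ∃ τ', Epi G (semPerm Q G) a τ' τ ∧
        ((τ' ++ [(a, b)] ∈ Q G ∧ TerminalIn Q G (τ' ++ [(a, b)])) →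
          AllExpert (doCalls G (τ' ++ [(a, b)])))) }

/-- The syntactic protocol LNS: `LNS_ab := ¬ S_ab`. -/
def LNSsyn (A : Type) : Protocol A := fun a b => Form.neg (Form.atomS a b)

/-- LNS-permitted: call `ab` permitted at `(G,σ)` iff `N^σ a b` and not `S^σ a b`. -/
def LNSperm (G : GossipGraph A) (σ : List (A × A)) (c : A × A) : Prop :=
  c.1 ≠ c.2 ∧ (doCalls G σ).N c.1 c.2 ∧ ¬ (doCalls G σ).S c.1 c.2

/-- LNS as a semantic protocol. -/
def LNSsem : RawSem A := fun G => { σ | Ext G (LNSperm G) σ }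

/-- A semantic protocol is strongly successful on `G` iff every terminal sequence makes
all agents experts. -/
def StronglySuccessfulOn (Q : RawSem A) (G : GossipGraph A) : Prop :=
  ∀ σ ∈ Q G, TerminalIn Q G σ → AllExpert (doCalls G σ)

/-- A semantic protocol is weakly successful on `G` iff some terminal sequence makes
all agents experts. -/
def WeaklySuccessfulOn (Q : RawSem A) (G : GossipGraph A) : Prop :=
  ∃ σ ∈ Q G, TerminalIn Q G σ ∧ AllExpert (doCalls G σ)


/-- The "spaceship" initial gossip graph on agents 0,1,2,3:
`N` is the reflexive closure of {(0,1),(3,1),(1,2)} and `S` is the identity. -/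
def spaceship : GossipGraph (Fin 4) where
  N x y := x = y ∨ (x = 0 ∧ y = 1) ∨ (x = 3 ∧ y = 1) ∨ (x = 1 ∧ y = 2)
  S x y := x = y
  refl_S a := rfl
  S_sub_N a b h := Or.inl h



abbrev C4 := Fin 4 × Fin 4

/-- Boolean step of a call on boolean N/S tables. -/
def bstep (f : Fin 4 → Fin 4 → Bool) (c : C4) : Fin 4 → Fin 4 → Bool :=
  fun x y => f x y || ((x == c.1 || x == c.2) && (f c.1 y || f c.2 y))

def bN0 : Fin 4 → Fin 4 → Bool := fun x y =>
  x == y || (x == 0 && y == 1) || (x == 3 && y == 1) || (x == 1 && y == 2)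

def bS0 : Fin 4 → Fin 4 → Bool := fun x y => x == y

def bNs (σ : List C4) : Fin 4 → Fin 4 → Bool := σ.foldl bstep bN0
def bSs (σ : List C4) : Fin 4 → Fin 4 → Bool := σ.foldl bstep bS0

theorem bstep_correct {G : GossipGraph (Fin 4)} {f g : Fin 4 → Fin 4 → Bool}
    (hN : ∀ x y, G.N x y ↔ f x y = true) (hS : ∀ x y, G.S x y ↔ g x y = true) (c : C4) :
    (∀ x y, (doCall G c).N x y ↔ bstep f c x y = true) ∧
    (∀ x y, (doCall G c).S x y ↔ bstep g c x y = true) := by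
  constructor <;> intro x y <;> simp [doCall, bstep, hN, hS, or_assoc, and_or_left]

theorem bNSs_correct (σ : List C4) :
    ∀ {G : GossipGraph (Fin 4)} {f g : Fin 4 → Fin 4 → Bool},
    (∀ x y, G.N x y ↔ f x y = true) → (∀ x y, G.S x y ↔ g x y = true) →
    (∀ x y, (doCalls G σ).N x y ↔ (σ.foldl bstep f) x y = true) ∧
    (∀ x y, (doCalls G σ).S x y ↔ (σ.foldl bstep g) x y = true) := by
  induction σ with
  | nil => intro G f g hN hS; exact ⟨hN, hS⟩
  | cons c σ ih =>
      intro G f g hN hS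
      have h := bstep_correct hN hS c
      exact ih h.1 h.2

theorem spaceship_bN0 : ∀ x y, spaceship.N x y ↔ bN0 x y = true := by
  intro x y; simp [spaceship, bN0]; constructor
  · rintro (h|h|h|h) <;> simp_all
  · intro h; rcases x with _|_|_|_ <;> rcases y with _|_|_|_ <;> simp_all <;> omega

theorem spaceship_bS0 : ∀ x y, spaceship.S x y ↔ bS0 x y = true := by
  intro x y; simp [spaceship, bS0]

theorem bNs_correct (σ : List C4) (x y : Fin 4) :
    (doCalls spaceship σ).N x y ↔ bNs σ x y = true :=
  (bNSs_correct σ spaceship_bN0 spaceship_bS0).1 x y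

theorem bSs_correct (σ : List C4) (x y : Fin 4) :
    (doCalls spaceship σ).S x y ↔ bSs σ x y = true :=
  (bNSs_correct σ spaceship_bN0 spaceship_bS0).2 x y

variable {A : Type}

/-- Agreement of agent `b`'s state between two sequences. -/
def Agree (G : GossipGraph A) (σ τ : List (A × A)) (b : A) : Prop :=
  (∀ x, (doCalls G σ).N b x ↔ (doCalls G τ).N b x) ∧
  (∀ x, (doCalls G σ).S b x ↔ (doCalls G τ).S b x)

theorem epi_nil_iff {G : GossipGraph A} {perm} {a : A} {τ : List (A × A)} :
    Epi G perm a τ [] ↔ τ = [] := by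
  constructor
  · intro h
    generalize hσ : ([] : List (A × A)) = σ' at h
    cases h with
    | refl => rfl
    | call_out h1 h2 h3 h4 h5 => simp at hσ
    | call_in h1 h2 h3 h4 h5 => simp at hσ
    | other h1 h2 h3 h4 h5 h6 h7 => simp at hσ
  · rintro rfl; exact Epi.refl

theorem epi_snoc_iff {G : GossipGraph A} {perm} {a : A} {ρ σ : List (A × A)} {c : A × A} :
    Epi G perm a ρ (σ ++ [c]) ↔
      ∃ τ d, ρ = τ ++ [d] ∧ Epi G perm a τ σ ∧
        ((c.1 = a ∧ d = c ∧ Agree G τ σ c.2 ∧ perm τ c ∧ perm σ c) ∨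
         (c.2 = a ∧ d = c ∧ Agree G τ σ c.1 ∧ perm τ c ∧ perm σ c) ∨
         (c.1 ≠ a ∧ c.2 ≠ a ∧ d.1 ≠ a ∧ d.2 ≠ a ∧ perm τ d ∧ perm σ c)) := by
  constructor
  · intro h
    generalize hσ : σ ++ [c] = σ' at h
    cases h with
    | refl => simp at hσ
    | @call_out σ₀ τ₀ b h1 h2 h3 h4 h5 =>
        obtain ⟨rfl, hc⟩ := List.append_inj' hσ rfl
        obtain rfl : c = (a, b) := by simpa using hc
        exact ⟨σ₀, (a, b), rfl, h1, Or.inl ⟨rfl, rfl, ⟨h2, h3⟩, h4, h5⟩⟩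
    | @call_in σ₀ τ₀ b h1 h2 h3 h4 h5 =>
        obtain ⟨rfl, hc⟩ := List.append_inj' hσ rfl
        obtain rfl : c = (b, a) := by simpa using hc
        exact ⟨σ₀, (b, a), rfl, h1, Or.inr (Or.inl ⟨rfl, rfl, ⟨h2, h3⟩, h4, h5⟩)⟩
    | @other σ₀ τ₀ c' d' e' f' h1 hc hd he hf h5 h6 =>
        obtain ⟨rfl, hc'⟩ := List.append_inj' hσ rfl
        obtain rfl : c = (e', f') := by simpa using hc'
        exact ⟨σ₀, (c', d'), rfl, h1, Or.inr (Or.inr ⟨he, hf, hc, hd, h5, h6⟩)⟩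
  · rintro ⟨τ, ⟨x, y⟩, rfl, hepi, (⟨h1, rfl, hag, hp1, hp2⟩ | ⟨h1, rfl, hag, hp1, hp2⟩ |
      ⟨h1, h2, h3, h4, hp1, hp2⟩)⟩
    · cases h1; exact Epi.call_out hepi hag.1 hag.2 hp1 hp2
    · cases h1; exact Epi.call_in hepi hag.1 hag.2 hp1 hp2
    · obtain ⟨u, v⟩ := c
      exact Epi.other hepi h3 h4 h1 h2 hp1 hp2

theorem epi_perm_congr {G : GossipGraph A} {p q : List (A × A) → (A × A) → Prop}
    (h : ∀ ρ c, p ρ c ↔ q ρ c) {a : A} {τ σ : List (A × A)} :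
    Epi G p a τ σ → Epi G q a τ σ := by
  intro he
  induction he with
  | refl => exact Epi.refl
  | call_out h1 h2 h3 h4 h5 ih => exact Epi.call_out ih h2 h3 ((h _ _).1 h4) ((h _ _).1 h5)
  | call_in h1 h2 h3 h4 h5 ih => exact Epi.call_in ih h2 h3 ((h _ _).1 h4) ((h _ _).1 h5)
  | other h1 h2 h3 h4 h5 h6 h7 ih => exact Epi.other ih h2 h3 h4 h5 ((h _ _).1 h6) ((h _ _).1 h7)
variable {A : Type}

theorem sat_listConj {G : GossipGraph A} {σ} {l : List (Form A)} :
    Sat G σ (listConj l) ↔ ∀ φ ∈ l, Sat G σ φ := by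
  induction l with
  | nil => simp [listConj, Sat]
  | cons φ l ih => simp [listConj, Sat] at ih ⊢; exact fun _ => ih

theorem mem_pairsList [Fintype A] (c : A × A) : c ∈ pairsList A :=
  Finset.mem_toList.2 (Finset.mem_univ c)

theorem mem_distinctPairs [Fintype A] [DecidableEq A] {c : A × A} :
    c ∈ distinctPairs A ↔ c.1 ≠ c.2 := by
  simp [distinctPairs, List.mem_filter, mem_pairsList]

theorem sat_ExForm [Fintype A] {G : GossipGraph A} {σ} :
    Sat G σ (ExForm (A := A)) ↔ AllExpert (doCalls G σ) := by
  rw [ExForm, sat_listConj]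
  constructor
  · intro h a b
    have := h _ (List.mem_map.2 ⟨(a, b), mem_pairsList _, rfl⟩)
    simpa [Sat] using this
  · rintro h φ hφ
    obtain ⟨c, -, rfl⟩ := List.mem_map.1 hφ
    simpa [Sat] using h c.1 c.2

theorem progRel_foldr_cup {G : GossipGraph A} {l : List (Prog A)} {z : Prog A} {σ τ} :
    ProgRel G (l.foldr Prog.cup z) σ τ ↔ (∃ π ∈ l, ProgRel G π σ τ) ∨ ProgRel G z σ τ := by
  induction l with
  | nil => simp
  | cons π l ih => simp [ProgRel, ih, or_assoc]

theorem protProg_step_iff [Fintype A] [DecidableEq A] {G : GossipGraph A} {P : Protocol A} {σ τ} :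
    ProgRel G (((distinctPairs A).map (fun c =>
        Prog.seq (Prog.test (Form.conj (Form.atomN c.1 c.2) (P c.1 c.2))) (Prog.call c.1 c.2))).foldr
        Prog.cup (Prog.test (Form.neg Form.top))) σ τ ↔
      ∃ c : A × A, Permits G P σ c ∧ τ = σ ++ [c] := by
  rw [progRel_foldr_cup]
  constructor
  · rintro (⟨π, hπ, hrel⟩ | h)
    · obtain ⟨c, hc, rfl⟩ := List.mem_map.1 hπ
      obtain ⟨ρ, ⟨rfl, hsat⟩, hne, hN, rfl⟩ := hrel
      simp only [Sat] at hsat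
      exact ⟨c, ⟨hne, hN, hsat.2⟩, rfl⟩
    · exact absurd h.2 (by simp [Sat])
  · rintro ⟨c, ⟨hne, hN, hP⟩, rfl⟩
    refine Or.inl ⟨_, List.mem_map.2 ⟨c, mem_distinctPairs.2 hne, rfl⟩,
      ⟨σ, ⟨rfl, ?_⟩, hne, hN, rfl⟩⟩
    simpa [Sat] using ⟨hN, hP⟩

theorem protProg_iff [Fintype A] [DecidableEq A] {G : GossipGraph A} {P : Protocol A} {σ τ} :
    ProgRel G (protProg A P) σ τ ↔
      Relation.ReflTransGen (fun x y => ∃ c : A × A, Permits G P x c ∧ y = x ++ [c]) σ τ ∧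
        ∀ c : A × A, ¬ Permits G P τ c := by
  rw [protProg]
  constructor
  · rintro ⟨ρ, hstar, rfl, hsat⟩
    have hstar' : Relation.ReflTransGen
        (fun x y => ProgRel G (((distinctPairs A).map (fun c =>
          Prog.seq (Prog.test (Form.conj (Form.atomN c.1 c.2) (P c.1 c.2)))
            (Prog.call c.1 c.2))).foldr Prog.cup (Prog.test (Form.neg Form.top))) x y) σ ρ := by
      simpa [ProgRel] using hstar
    refine ⟨Relation.ReflTransGen.mono (fun x y h => protProg_step_iff.1 h) _ _ hstar', ?_⟩
    rintro c ⟨hne, hN, hP⟩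
    rw [sat_listConj] at hsat
    have := hsat _ (List.mem_map.2 ⟨c, mem_distinctPairs.2 hne, rfl⟩)
    simp only [Sat] at this
    exact this ⟨hN, hP⟩
  · rintro ⟨hstar, hterm⟩
    refine ⟨τ, ?_, rfl, ?_⟩
    · show Relation.ReflTransGen _ σ τ
      exact Relation.ReflTransGen.mono (fun x y h => protProg_step_iff.2 h) _ _ hstar
    · rw [sat_listConj]
      rintro φ hφ
      obtain ⟨c, hc, rfl⟩ := List.mem_map.1 hφ
      have hne := mem_distinctPairs.1 hc
      simp only [Sat]
      rintro ⟨hN, hP⟩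
      exact hterm c ⟨hne, hN, hP⟩
def allP4 : List C4 :=
  [(0,0),(0,1),(0,2),(0,3),(1,0),(1,1),(1,2),(1,3),
   (2,0),(2,1),(2,2),(2,3),(3,0),(3,1),(3,2),(3,3)]

def allC4 : List C4 :=
  [(0,1),(0,2),(0,3),(1,0),(1,2),(1,3),(2,0),(2,1),(2,3),(3,0),(3,1),(3,2)]

theorem mem_allP4 : ∀ c : C4, c ∈ allP4 := by decide

theorem mem_allC4' : ∀ c : C4, c.1 ≠ c.2 → c ∈ allC4 := by decide

theorem mem_allC4 {c : C4} (h : c.1 ≠ c.2) : c ∈ allC4 := mem_allC4' c h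

def termB (pb : List C4 → C4 → Bool) (σ : List C4) : Bool := allC4.all fun c => !pb σ c
def exB (σ : List C4) : Bool := allP4.all fun c => bSs σ c.1 c.2

def succB (pb : List C4 → C4 → Bool) : Nat → List C4 → Bool
  | 0, _ => false
  | n+1, σ => if termB pb σ then exB σ else allC4.any fun c => pb σ c && succB pb n (σ ++ [c])

/-- Number of non-shared secret pairs; termination measure. -/
def mu (σ : List C4) : Nat :=
  ((Finset.univ : Finset C4).filter (fun c => bSs σ c.1 c.2 = false)).card

theorem doCalls_snoc {A : Type} (G : GossipGraph A) (σ : List (A × A)) (c : A × A) :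
    doCalls G (σ ++ [c]) = doCall (doCalls G σ) c := by
  simp [doCalls, List.foldl_append]


theorem bSs_mono {σ : List C4} {c : C4} {x y : Fin 4} (h : bSs σ x y = true) :
    bSs (σ ++ [c]) x y = true := by
  rw [← bSs_correct] at *
  rw [doCalls_snoc]
  exact Or.inl h

theorem bSs_call {σ : List C4} {c : C4} : bSs (σ ++ [c]) c.1 c.2 = true := by
  rw [← bSs_correct, doCalls_snoc]
  exact Or.inr ⟨Or.inl rfl, Or.inr ((doCalls spaceship σ).refl_S c.2)⟩

theorem mu_lt {σ : List C4} {c : C4} (h : bSs σ c.1 c.2 = false) :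
    mu (σ ++ [c]) < mu σ := by
  apply Finset.card_lt_card
  constructor
  · intro d hd
    simp only [Finset.mem_filter, Finset.mem_univ, true_and] at hd ⊢
    by_contra hb
    simp only [Bool.not_eq_false] at hb
    rw [bSs_mono hb] at hd
    exact absurd hd (by simp)
  · intro hsub
    have := hsub (Finset.mem_filter.2 ⟨Finset.mem_univ c, by simpa using h⟩)
    simp only [Finset.mem_filter, bSs_call] at this
    exact absurd this.2 (by simp)

theorem mu_le (σ : List C4) : mu σ ≤ 12 := by
  have h : ∀ a : Fin 4, bSs σ a a = true := fun a => by
    rw [← bSs_correct]; exact (doCalls spaceship σ).refl_S a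
  calc mu σ ≤ ((Finset.univ : Finset C4).filter (fun c => c.1 ≠ c.2)).card := by
        apply Finset.card_le_card
        intro d hd
        simp only [Finset.mem_filter, Finset.mem_univ, true_and] at hd ⊢
        intro hdd
        rw [hdd, h d.2] at hd
        exact absurd hd (by simp)
    _ = 12 := by decide
/-- The step relation of the protocol-as-program. -/
def PStep (P : Protocol (Fin 4)) (x y : List C4) : Prop :=
  ∃ c : C4, Permits spaceship P x c ∧ y = x ++ [c]

theorem termB_iff {P : Protocol (Fin 4)} {pb : List C4 → C4 → Bool}
    (hpb : ∀ σ c, pb σ c = true ↔ Permits spaceship P σ c) (σ : List C4) :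
    termB pb σ = true ↔ ∀ c : C4, ¬ Permits spaceship P σ c := by
  rw [termB, List.all_eq_true]
  constructor
  · intro h c hc
    have := h c (mem_allC4 hc.1)
    rw [Bool.not_eq_true', ← Bool.not_eq_true, hpb σ c] at this
    exact this hc
  · intro h c _
    rw [Bool.not_eq_true', ← Bool.not_eq_true, hpb σ c]
    exact h c

theorem exB_iff (σ : List C4) : exB σ = true ↔ AllExpert (doCalls spaceship σ) := by
  rw [exB, List.all_eq_true]
  constructor
  · intro h a b
    rw [bSs_correct]
    exact h (a, b) (mem_allP4 _)
  · intro h c _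
    rw [← bSs_correct]
    exact h c.1 c.2

theorem succB_correct {P : Protocol (Fin 4)} {pb : List C4 → C4 → Bool}
    (hpb : ∀ σ c, pb σ c = true ↔ Permits spaceship P σ c)
    (hPS : ∀ σ c, Permits spaceship P σ c → bSs σ c.1 c.2 = false) :
    ∀ (n : Nat) (σ : List C4), mu σ < n →
    (succB pb n σ = true ↔ ∃ τ, Relation.ReflTransGen (PStep P) σ τ ∧
      (∀ c : C4, ¬ Permits spaceship P τ c) ∧ AllExpert (doCalls spaceship τ)) := by
  intro n
  induction n with
  | zero => intro σ h; omega
  | succ n ih =>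
    intro σ hμ
    rw [succB]
    by_cases ht : termB pb σ = true
    · rw [if_pos ht]
      rw [termB_iff hpb] at ht
      constructor
      · intro hex
        exact ⟨σ, Relation.ReflTransGen.refl, ht, (exB_iff σ).1 hex⟩
      · rintro ⟨τ, hstar, hterm, hex⟩
        rcases Relation.ReflTransGen.cases_head hstar with rfl | ⟨ρ, ⟨c, hp, rfl⟩, -⟩
        · exact (exB_iff σ).2 hex
        · exact absurd hp (ht c)
    · rw [if_neg ht]
      rw [List.any_eq_true]
      constructor
      · rintro ⟨c, hc, hb⟩
        rw [Bool.and_eq_true] at hb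
        obtain ⟨hperm, hsucc⟩ := hb
        have hp := (hpb σ c).1 hperm
        have hlt : mu (σ ++ [c]) < n := by
          have := mu_lt (hPS σ c hp)
          omega
        obtain ⟨τ, hstar, hterm, hex⟩ := (ih _ hlt).1 hsucc
        exact ⟨τ, Relation.ReflTransGen.head ⟨c, hp, rfl⟩ hstar, hterm, hex⟩
      · rintro ⟨τ, hstar, hterm, hex⟩
        rcases Relation.ReflTransGen.cases_head hstar with rfl | ⟨ρ, ⟨c, hp, rfl⟩, hstar'⟩
        · exact absurd ((termB_iff hpb σ).2 hterm) ht
        · refine ⟨c, mem_allC4 hp.1, ?_⟩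
          rw [Bool.and_eq_true]
          have hlt : mu (σ ++ [c]) < n := by
            have := mu_lt (hPS σ c hp)
            omega
          exact ⟨(hpb σ c).2 hp, (ih _ hlt).2 ⟨τ, hstar', hterm, hex⟩⟩

/-- `succB` with fuel 13 decides the formula `⟨P⟩Ex`. -/
theorem succB13_iff {P : Protocol (Fin 4)} {pb : List C4 → C4 → Bool}
    (hpb : ∀ σ c, pb σ c = true ↔ Permits spaceship P σ c)
    (hPS : ∀ σ c, Permits spaceship P σ c → bSs σ c.1 c.2 = false) (σ : List C4) :
    succB pb 13 σ = true ↔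
      Sat spaceship σ (Form.neg (Form.box (protProg (Fin 4) P) (Form.neg (ExForm (Fin 4))))) := by
  have h1 : Sat spaceship σ (Form.neg (Form.box (protProg (Fin 4) P) (Form.neg (ExForm (Fin 4)))))
      ↔ ∃ τ, ProgRel spaceship (protProg (Fin 4) P) σ τ ∧ Sat spaceship τ (ExForm (Fin 4)) := by
    simp only [Sat]
    push_neg
    tauto
  rw [h1]
  rw [succB_correct hpb hPS 13 σ (by have := mu_le σ; omega)]
  constructor
  · rintro ⟨τ, hstar, hterm, hex⟩
    exact ⟨τ, protProg_iff.2 ⟨hstar, hterm⟩, sat_ExForm.2 hex⟩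
  · rintro ⟨τ, hrel, hex⟩
    obtain ⟨hstar, hterm⟩ := protProg_iff.1 hrel
    exact ⟨τ, hstar, hterm, sat_ExForm.1 hex⟩
def agreeB (t p : List C4) (b : Fin 4) : Bool :=
  ([0, 1, 2, 3] : List (Fin 4)).all fun x =>
    (bNs t b x == bNs p b x) && (bSs t b x == bSs p b x)

theorem fin4_mem : ∀ x : Fin 4, x ∈ ([0, 1, 2, 3] : List (Fin 4)) := by decide

theorem agreeB_iff {t p : List C4} {b : Fin 4} :
    agreeB t p b = true ↔ Agree spaceship t p b := by
  rw [agreeB, List.all_eq_true]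
  constructor
  · intro h
    constructor
    · intro x
      have := h x (fin4_mem x)
      simp only [Bool.and_eq_true, beq_iff_eq] at this
      rw [bNs_correct, bNs_correct, this.1]
    · intro x
      have := h x (fin4_mem x)
      simp only [Bool.and_eq_true, beq_iff_eq] at this
      rw [bSs_correct, bSs_correct, this.2]
  · rintro ⟨hN, hS⟩ x -
    have h1 := hN x; have h2 := hS x
    rw [bNs_correct, bNs_correct] at h1
    rw [bSs_correct, bSs_correct] at h2
    simp only [Bool.and_eq_true, beq_iff_eq]
    exact ⟨Bool.eq_iff_iff.2 h1, Bool.eq_iff_iff.2 h2⟩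

def epiStep (pb : List C4 → C4 → Bool) (a : Fin 4) (st : List (List C4) × List C4) (c : C4) :
    List (List C4) × List C4 :=
  let cls' :=
    if pb st.2 c then
      if c.1 = a ∨ c.2 = a then
        let b := if c.1 = a then c.2 else c.1
        (st.1.filter (fun t => agreeB t st.2 b && pb t c)).map (· ++ [c])
      else
        st.1.flatMap (fun t =>
          ((allC4.filter (fun e => !(e.1 == a) && !(e.2 == a) && pb t e)).map (fun e => t ++ [e])))
    else []
  (cls', st.2 ++ [c])

def epiL (pb : List C4 → C4 → Bool) (a : Fin 4) (σ : List C4) : List (List C4) :=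
  (σ.foldl (epiStep pb a) ([[]], [])).1

theorem epiFold_snd (pb : List C4 → C4 → Bool) (a : Fin 4) :
    ∀ (σ : List C4) (st : List (List C4) × List C4),
    (σ.foldl (epiStep pb a) st).2 = st.2 ++ σ := by
  intro σ
  induction σ with
  | nil => simp
  | cons c σ ih => intro st; rw [List.foldl_cons, ih, epiStep]; simp

theorem epiL_snoc (pb : List C4 → C4 → Bool) (a : Fin 4) (σ : List C4) (c : C4) :
    epiL pb a (σ ++ [c]) = (epiStep pb a ((σ.foldl (epiStep pb a) ([[]], [])).1, σ) c).1 := by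
  rw [epiL, List.foldl_append, List.foldl_cons, List.foldl_nil]
  congr 1
  have := epiFold_snd pb a σ ([[]], [])
  exact congrArg (epiStep pb a · c) (Prod.ext rfl (by simpa using this))
theorem epiL_correct {P : Protocol (Fin 4)} {pb : List C4 → C4 → Bool}
    (hpb : ∀ σ c, pb σ c = true ↔ Permits spaceship P σ c) (a : Fin 4) :
    ∀ σ τ : List C4, τ ∈ epiL pb a σ ↔ Epi spaceship (Permits spaceship P) a τ σ := by
  intro σ
  induction σ using List.reverseRecOn with
  | nil => intro τ; rw [epi_nil_iff]; simp [epiL]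
  | append_singleton σ c ih =>
    intro τ
    rw [epiL_snoc, epi_snoc_iff, epiStep]
    simp only []
    by_cases hp : pb σ c = true
    · rw [if_pos hp]
      by_cases hca : c.1 = a ∨ c.2 = a
      · rw [if_pos hca]
        by_cases hc1 : c.1 = a
        · simp only [if_pos hc1, List.mem_map, List.mem_filter, Bool.and_eq_true]
          constructor
          · rintro ⟨t, ⟨ht, hag, hpt⟩, rfl⟩
            exact ⟨t, c, rfl, (ih t).1 ht,
              Or.inl ⟨hc1, rfl, agreeB_iff.1 hag, (hpb t c).1 hpt, (hpb σ c).1 hp⟩⟩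
          · rintro ⟨t, d, rfl, hepi,
              (⟨h1, rfl, hag, hp1, hp2⟩ | ⟨h1, rfl, hag, hp1, hp2⟩ | ⟨h1, h2, h3, h4, hp1, hp2⟩)⟩
            · exact ⟨t, ⟨(ih t).2 hepi, agreeB_iff.2 hag, (hpb t d).2 hp1⟩, rfl⟩
            · exact absurd (hc1.trans h1.symm) hp1.1
            · exact absurd hc1 h1
        · have hc2 : c.2 = a := hca.resolve_left hc1
          simp only [if_neg hc1, List.mem_map, List.mem_filter, Bool.and_eq_true]
          constructor
          · rintro ⟨t, ⟨ht, hag, hpt⟩, rfl⟩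
            exact ⟨t, c, rfl, (ih t).1 ht,
              Or.inr (Or.inl ⟨hc2, rfl, agreeB_iff.1 hag, (hpb t c).1 hpt, (hpb σ c).1 hp⟩)⟩
          · rintro ⟨t, d, rfl, hepi,
              (⟨h1, rfl, hag, hp1, hp2⟩ | ⟨h1, rfl, hag, hp1, hp2⟩ | ⟨h1, h2, h3, h4, hp1, hp2⟩)⟩
            · exact absurd h1 hc1
            · exact ⟨t, ⟨(ih t).2 hepi, agreeB_iff.2 hag, (hpb t d).2 hp1⟩, rfl⟩
            · exact absurd hc2 h2
      · rw [if_neg hca]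
        push_neg at hca
        obtain ⟨hc1, hc2⟩ := hca
        simp only [List.mem_flatMap, List.mem_map, List.mem_filter, Bool.and_eq_true]
        constructor
        · rintro ⟨t, ht, e, ⟨he, ⟨hne1, hne2⟩, hpe⟩, rfl⟩
          exact ⟨t, e, rfl, (ih t).1 ht,
            Or.inr (Or.inr ⟨hc1, hc2, by simpa using hne1, by simpa using hne2,
              (hpb t e).1 hpe, (hpb σ c).1 hp⟩)⟩
        · rintro ⟨t, d, rfl, hepi,
            (⟨h1, rfl, hag, hp1, hp2⟩ | ⟨h1, rfl, hag, hp1, hp2⟩ | ⟨h1, h2, h3, h4, hp1, hp2⟩)⟩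
          · exact absurd h1 hc1
          · exact absurd h1 hc2
          · exact ⟨t, (ih t).2 hepi, d,
              ⟨mem_allC4 hp1.1, ⟨by simpa using h3, by simpa using h4⟩, (hpb t d).2 hp1⟩, rfl⟩
    · rw [if_neg hp]
      simp only [List.not_mem_nil, false_iff]
      rintro ⟨t, d, rfl, hepi,
        (⟨h1, rfl, hag, hp1, hp2⟩ | ⟨h1, rfl, hag, hp1, hp2⟩ | ⟨h1, h2, h3, h4, hp1, hp2⟩)⟩ <;>
        exact hp ((hpb σ _).2 hp2)

theorem sat_K_iff {P : Protocol (Fin 4)} {pb : List C4 → C4 → Bool}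
    (hpb : ∀ σ c, pb σ c = true ↔ Permits spaceship P σ c) {a : Fin 4} {σ : List C4}
    {φ : Form (Fin 4)} :
    Sat spaceship σ (Form.K a P φ) ↔ ∀ τ ∈ epiL pb a σ, Sat spaceship τ φ := by
  show (∀ τ, Epi spaceship _ a τ σ → Sat spaceship τ φ) ↔ _
  constructor
  · intro h τ hτ
    exact h τ ((epiL_correct hpb a σ τ).1 hτ)
  · intro h τ hτ
    exact h τ ((epiL_correct hpb a σ τ).2 hτ)

theorem sat_hatK_iff {P : Protocol (Fin 4)} {pb : List C4 → C4 → Bool}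
    (hpb : ∀ σ c, pb σ c = true ↔ Permits spaceship P σ c) {a : Fin 4} {σ : List C4}
    {φ : Form (Fin 4)} :
    Sat spaceship σ (hatK a P φ) ↔ ∃ τ ∈ epiL pb a σ, Sat spaceship τ φ := by
  rw [hatK]
  have h1 : Sat spaceship σ (Form.neg (Form.K a P (Form.neg φ))) ↔
      ¬ Sat spaceship σ (Form.K a P (Form.neg φ)) := by simp [Sat]
  rw [h1, sat_K_iff hpb]
  push_neg
  constructor
  · rintro ⟨τ, hτ, hsat⟩
    refine ⟨τ, hτ, ?_⟩
    by_contra hc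
    exact hsat (by simp [Sat, hc])
  · rintro ⟨τ, hτ, hsat⟩
    exact ⟨τ, hτ, by simp [Sat]; exact hsat⟩
def pbLNS (σ : List C4) (c : C4) : Bool := !(c.1 == c.2) && bNs σ c.1 c.2 && !bSs σ c.1 c.2

def pbSoft (σ : List C4) (c : C4) : Bool :=
  pbLNS σ c && ((epiL pbLNS c.1 σ).any fun t => !bNs t c.1 c.2 || succB pbLNS 13 (t ++ [c]))

def pbHardOf (pbR : List C4 → C4 → Bool) (σ : List C4) (c : C4) : Bool :=
  pbR σ c && ((epiL pbR c.1 σ).all fun t => !bNs t c.1 c.2 || succB pbR 13 (t ++ [c]))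

def pbHardSoft : List C4 → C4 → Bool := pbHardOf pbSoft
def pbHardLNS : List C4 → C4 → Bool := pbHardOf pbLNS

theorem sat_box_call {G : GossipGraph (Fin 4)} {σ : List C4} {a b : Fin 4} {φ : Form (Fin 4)} :
    Sat G σ (Form.box (Prog.call a b) φ) ↔
      (a ≠ b ∧ (doCalls G σ).N a b → Sat G (σ ++ [(a, b)]) φ) := by
  simp only [Sat, ProgRel]
  constructor
  · intro h hc; exact h _ ⟨hc.1, hc.2, rfl⟩
  · rintro h τ ⟨h1, h2, rfl⟩; exact h ⟨h1, h2⟩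

theorem pbLNS_correct : ∀ σ c, pbLNS σ c = true ↔ Permits spaceship (LNSsyn (Fin 4)) σ c := by
  intro σ c
  rw [pbLNS, Permits]
  simp only [Bool.and_eq_true, Bool.not_eq_true', beq_eq_false_iff_ne, ne_eq, LNSsyn, Sat]
  constructor
  · rintro ⟨⟨hne, hN⟩, hS⟩
    exact ⟨hne, (bNs_correct ..).2 hN, fun hs => by rw [(bSs_correct ..).1 hs] at hS; cases hS⟩
  · rintro ⟨hne, hN, hS⟩
    refine ⟨⟨hne, (bNs_correct ..).1 hN⟩, ?_⟩
    cases hb : bSs σ c.1 c.2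
    · rfl
    · exact absurd ((bSs_correct ..).2 hb) hS

theorem hPS_LNS : ∀ σ c, Permits spaceship (LNSsyn (Fin 4)) σ c → bSs σ c.1 c.2 = false := by
  intro σ c h
  have hS : ¬ (doCalls spaceship σ).S c.1 c.2 := by
    have := h.2.2; simpa [LNSsyn, Sat] using this
  cases hb : bSs σ c.1 c.2
  · rfl
  · exact absurd ((bSs_correct ..).2 hb) hS

theorem pbSoft_correct :
    ∀ σ c, pbSoft σ c = true ↔ Permits spaceship (softLookAhead (LNSsyn (Fin 4))) σ c := by
  intro σ c
  obtain ⟨a, b⟩ := c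
  rw [pbSoft, Bool.and_eq_true, Permits]
  show _ ↔ a ≠ b ∧ (doCalls spaceship σ).N a b ∧ Sat spaceship σ (Form.conj _ _)
  have hconj : Sat spaceship σ (Form.conj (LNSsyn (Fin 4) a b)
      (hatK a (LNSsyn (Fin 4)) (Form.box (Prog.call a b)
        (Form.neg (Form.box (protProg (Fin 4) (LNSsyn (Fin 4))) (Form.neg (ExForm (Fin 4)))))))) ↔
      Sat spaceship σ (LNSsyn (Fin 4) a b) ∧
        Sat spaceship σ (hatK a (LNSsyn (Fin 4)) (Form.box (Prog.call a b)
          (Form.neg (Form.box (protProg (Fin 4) (LNSsyn (Fin 4))) (Form.neg (ExForm (Fin 4))))))) := by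
    simp [Sat]
  constructor
  · rintro ⟨h1, h2⟩
    have hp := (pbLNS_correct σ (a, b)).1 h1
    refine ⟨hp.1, hp.2.1, hconj.2 ⟨hp.2.2, ?_⟩⟩
    rw [sat_hatK_iff pbLNS_correct]
    rw [List.any_eq_true] at h2
    obtain ⟨t, ht, hb⟩ := h2
    refine ⟨t, ht, ?_⟩
    rw [sat_box_call]
    rintro ⟨hne, hN⟩
    rw [Bool.or_eq_true] at hb
    rcases hb with hb | hb
    · rw [Bool.not_eq_true'] at hb
      rw [bNs_correct, hb] at hN
      cases hN
    · exact (succB13_iff pbLNS_correct hPS_LNS _).1 hb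
  · rintro ⟨hne, hN, hsat⟩
    obtain ⟨hlns, hhat⟩ := hconj.1 hsat
    have h1 : pbLNS σ (a, b) = true := (pbLNS_correct σ (a, b)).2 ⟨hne, hN, hlns⟩
    refine ⟨h1, ?_⟩
    rw [sat_hatK_iff pbLNS_correct] at hhat
    obtain ⟨t, ht, hb⟩ := hhat
    rw [List.any_eq_true]
    refine ⟨t, ht, ?_⟩
    rw [Bool.or_eq_true]
    rw [sat_box_call] at hb
    cases hNb : bNs t a b
    · exact Or.inl (by simp)
    · exact Or.inr ((succB13_iff pbLNS_correct hPS_LNS _).2 (hb ⟨hne, (bNs_correct ..).2 hNb⟩))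

theorem hPS_soft :
    ∀ σ c, Permits spaceship (softLookAhead (LNSsyn (Fin 4))) σ c → bSs σ c.1 c.2 = false := by
  intro σ c h
  refine hPS_LNS σ c ⟨h.1, h.2.1, ?_⟩
  have := h.2.2
  simp only [softLookAhead, Sat] at this ⊢
  exact this.1

theorem pbHardOf_correct {R : Protocol (Fin 4)} {pbR : List C4 → C4 → Bool}
    (hpbR : ∀ σ c, pbR σ c = true ↔ Permits spaceship R σ c)
    (hRS : ∀ σ c, Permits spaceship R σ c → bSs σ c.1 c.2 = false) :
    ∀ σ c, pbHardOf pbR σ c = true ↔ Permits spaceship (hardLookAhead R) σ c := by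
  intro σ c
  obtain ⟨a, b⟩ := c
  rw [pbHardOf, Bool.and_eq_true, Permits]
  show _ ↔ a ≠ b ∧ (doCalls spaceship σ).N a b ∧ Sat spaceship σ (Form.conj _ _)
  have hconj : Sat spaceship σ (Form.conj (R a b)
      (Form.K a R (Form.box (Prog.call a b)
        (Form.neg (Form.box (protProg (Fin 4) R) (Form.neg (ExForm (Fin 4)))))))) ↔
      Sat spaceship σ (R a b) ∧
        Sat spaceship σ (Form.K a R (Form.box (Prog.call a b)
          (Form.neg (Form.box (protProg (Fin 4) R) (Form.neg (ExForm (Fin 4))))))) := by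
    simp [Sat]
  constructor
  · rintro ⟨h1, h2⟩
    have hp := (hpbR σ (a, b)).1 h1
    refine ⟨hp.1, hp.2.1, hconj.2 ⟨hp.2.2, ?_⟩⟩
    rw [sat_K_iff hpbR]
    rw [List.all_eq_true] at h2
    intro t ht
    have hb := h2 t ht
    rw [sat_box_call]
    rintro ⟨hne, hN⟩
    rw [Bool.or_eq_true] at hb
    rcases hb with hb | hb
    · rw [Bool.not_eq_true'] at hb
      rw [bNs_correct, hb] at hN
      cases hN
    · exact (succB13_iff hpbR hRS _).1 hb
  · rintro ⟨hne, hN, hsat⟩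
    obtain ⟨hR, hK⟩ := hconj.1 hsat
    have h1 : pbR σ (a, b) = true := (hpbR σ (a, b)).2 ⟨hne, hN, hR⟩
    refine ⟨h1, ?_⟩
    rw [sat_K_iff hpbR] at hK
    rw [List.all_eq_true]
    intro t ht
    have hb := hK t ht
    rw [Bool.or_eq_true]
    rw [sat_box_call] at hb
    cases hNb : bNs t a b
    · exact Or.inl (by simp)
    · exact Or.inr ((succB13_iff hpbR hRS _).2 (hb ⟨hne, (bNs_correct ..).2 hNb⟩))

theorem pbHardSoft_correct : ∀ σ c, pbHardSoft σ c = true ↔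
    Permits spaceship (hardLookAhead (softLookAhead (LNSsyn (Fin 4)))) σ c :=
  pbHardOf_correct pbSoft_correct hPS_soft

theorem pbHardLNS_correct : ∀ σ c, pbHardLNS σ c = true ↔
    Permits spaceship (hardLookAhead (LNSsyn (Fin 4))) σ c :=
  pbHardOf_correct pbLNS_correct hPS_LNS
def chk (pb : List C4 → C4 → Bool) : List C4 → List C4 → Bool
  | _, [] => true
  | p, c :: r => pb p c && chk pb (p ++ [c]) r

theorem chk_append (pb : List C4 → C4 → Bool) :
    ∀ (σ p : List C4) (c : C4), chk pb p (σ ++ [c]) = (chk pb p σ && pb (p ++ σ) c) := by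
  intro σ
  induction σ with
  | nil => simp [chk]
  | cons d σ ih =>
      intro p c
      rw [List.cons_append, chk, chk, ih (p ++ [d]) c, Bool.and_assoc]
      simp

theorem ext_iff_chk {perm : List C4 → C4 → Prop} {pb : List C4 → C4 → Bool}
    (hpb : ∀ σ c, pb σ c = true ↔ perm σ c) {G : GossipGraph (Fin 4)} :
    ∀ σ : List C4, Ext G perm σ ↔ chk pb [] σ = true := by
  intro σ
  constructor
  · intro h
    induction h with
    | nil => rfl
    | @snoc σ c hσ hc ih =>
        rw [chk_append]
        simp only [List.nil_append, Bool.and_eq_true]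
        exact ⟨ih, (hpb _ _).2 hc⟩
  · induction σ using List.reverseRecOn with
    | nil => intro _; exact Ext.nil
    | append_singleton σ c ih =>
        intro h
        rw [chk_append] at h
        simp only [Bool.and_eq_true, List.nil_append] at h
        exact Ext.snoc (ih h.1) ((hpb _ _).1 h.2)

def L25 : List (List C4) :=
  [[],
   [(0,1)], [(3,1)],
   [(0,1),(3,1)], [(3,1),(0,1)],
   [(0,1),(3,1),(1,2)], [(0,1),(3,1),(3,2)], [(3,1),(0,1),(0,2)], [(3,1),(0,1),(1,2)],
   [(0,1),(3,1),(1,2),(0,2)], [(0,1),(3,1),(1,2),(3,2)], [(0,1),(3,1),(3,2),(0,2)],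
   [(0,1),(3,1),(3,2),(1,2)], [(3,1),(0,1),(0,2),(1,2)], [(3,1),(0,1),(0,2),(3,2)],
   [(3,1),(0,1),(1,2),(0,2)], [(3,1),(0,1),(1,2),(3,2)],
   [(0,1),(3,1),(1,2),(0,2),(3,2)], [(0,1),(3,1),(1,2),(3,2),(0,2)],
   [(0,1),(3,1),(3,2),(0,2),(1,2)], [(0,1),(3,1),(3,2),(1,2),(0,2)],
   [(3,1),(0,1),(0,2),(1,2),(3,2)], [(3,1),(0,1),(0,2),(3,2),(1,2)],
   [(3,1),(0,1),(1,2),(0,2),(3,2)], [(3,1),(0,1),(1,2),(3,2),(0,2)]]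

def L3 : List (List C4) := [[], [(0,1)], [(3,1)]]

set_option maxHeartbeats 0 in
theorem dec1 : ∀ σ ∈ L25, ∀ c ∈ allP4, pbSoft σ c = true → σ ++ [c] ∈ L25 := by decide

set_option maxHeartbeats 0 in
theorem dec2 : ∀ σ ∈ L25, ∀ c ∈ allP4, pbSoft σ c = true → pbHardSoft σ c = true := by decide

set_option maxHeartbeats 0 in
theorem dec3 : ∀ σ ∈ L25, termB pbSoft σ = true → exB σ = true := by decide

set_option maxHeartbeats 0 in
theorem dec4 : ∀ σ ∈ L3, ∀ c ∈ allP4, pbHardLNS σ c = true → σ ++ [c] ∈ L3 := by decide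

set_option maxHeartbeats 0 in
theorem dec5 : chk pbHardSoft []
    [((0 : Fin 4), (1 : Fin 4)), (3, 1), (1, 2), (0, 2), (3, 2)] = true := by decide
theorem permits_soft_le {B : Type} [Fintype B] [DecidableEq B] {G : GossipGraph B}
    {R : Protocol B} {σ : List (B × B)} {c : B × B}
    (h : Permits G (softLookAhead R) σ c) : Permits G R σ c := by
  refine ⟨h.1, h.2.1, ?_⟩
  have := h.2.2
  simp only [softLookAhead, Sat] at this
  exact this.1

theorem permits_hard_le {B : Type} [Fintype B] [DecidableEq B] {G : GossipGraph B}
    {R : Protocol B} {σ : List (B × B)} {c : B × B}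
    (h : Permits G (hardLookAhead R) σ c) : Permits G R σ c := by
  refine ⟨h.1, h.2.1, ?_⟩
  have := h.2.2
  simp only [hardLookAhead, Sat] at this
  exact this.1

theorem hmem25 : ∀ σ, Ext spaceship (Permits spaceship (softLookAhead (LNSsyn (Fin 4)))) σ →
    σ ∈ L25 := by
  intro σ h
  induction h with
  | nil => decide
  | snoc hσ hc ih => exact dec1 _ ih _ (mem_allP4 _) ((pbSoft_correct _ _).2 hc)

theorem hmemL3 : ∀ σ, Ext spaceship (Permits spaceship (hardLookAhead (LNSsyn (Fin 4)))) σ →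
    σ ∈ L3 := by
  intro σ h
  induction h with
  | nil => decide
  | snoc hσ hc ih => exact dec4 _ ih _ (mem_allP4 _) ((pbHardLNS_correct _ _).2 hc)

/-- Hard look-ahead strengthening is not monotone: on the spaceship graph, with
`Q = LNS^♦ ⊆ P = LNS`, we have `Q^■(G) = Q(G)` (as `Q` is strongly successful on `G`)
while `P^■(G)` contains no sequence of length greater than one; in particular
`01;31;12;02;32 ∈ Q^■(G) \ P^■(G)`. -/
theorem hard_lookahead_not_monotone :
    Initial spaceship ∧
    (∀ G : GossipGraph (Fin 4), Initial G →
      extension (softLookAhead (LNSsyn (Fin 4))) G ⊆ extension (LNSsyn (Fin 4)) G) ∧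
    StronglySuccessfulOn (extension (softLookAhead (LNSsyn (Fin 4)))) spaceship ∧
    extension (hardLookAhead (softLookAhead (LNSsyn (Fin 4)))) spaceship =
      extension (softLookAhead (LNSsyn (Fin 4))) spaceship ∧
    (∀ σ ∈ extension (hardLookAhead (LNSsyn (Fin 4))) spaceship, σ.length ≤ 1) ∧
    ([((0 : Fin 4), (1 : Fin 4)), (3, 1), (1, 2), (0, 2), (3, 2)] ∈
      extension (hardLookAhead (softLookAhead (LNSsyn (Fin 4)))) spaceship) ∧
    ([((0 : Fin 4), (1 : Fin 4)), (3, 1), (1, 2), (0, 2), (3, 2)] ∉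
      extension (hardLookAhead (LNSsyn (Fin 4))) spaceship) ∧
    ¬ (extension (hardLookAhead (softLookAhead (LNSsyn (Fin 4)))) spaceship ⊆
        extension (hardLookAhead (LNSsyn (Fin 4))) spaceship) := by
  have part1 : Initial spaceship := fun a b => Iff.rfl
  have part2 : ∀ G : GossipGraph (Fin 4), Initial G →
      extension (softLookAhead (LNSsyn (Fin 4))) G ⊆ extension (LNSsyn (Fin 4)) G := by
    intro G _ σ hσ
    have h : Ext G (Permits G (softLookAhead (LNSsyn (Fin 4)))) σ := hσ
    clear hσ
    show Ext G (Permits G (LNSsyn (Fin 4))) σ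
    induction h with
    | nil => exact Ext.nil
    | snoc hσ' hc ih => exact Ext.snoc ih (permits_soft_le hc)
  have part5 : ∀ σ ∈ extension (hardLookAhead (LNSsyn (Fin 4))) spaceship, σ.length ≤ 1 := by
    intro σ hσ
    have h := hmemL3 σ hσ
    simp only [L3, List.mem_cons, List.not_mem_nil, or_false] at h
    rcases h with rfl | rfl | rfl <;> simp
  have part6 : [((0 : Fin 4), (1 : Fin 4)), (3, 1), (1, 2), (0, 2), (3, 2)] ∈
      extension (hardLookAhead (softLookAhead (LNSsyn (Fin 4)))) spaceship :=
    (ext_iff_chk pbHardSoft_correct _).2 dec5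
  have part7 : [((0 : Fin 4), (1 : Fin 4)), (3, 1), (1, 2), (0, 2), (3, 2)] ∉
      extension (hardLookAhead (LNSsyn (Fin 4))) spaceship := by
    intro h
    have := part5 _ h
    simp at this
  refine ⟨part1, part2, ?_, ?_, part5, part6, part7, fun hsub => part7 (hsub part6)⟩
  · -- part 3
    intro σ hσ hterm
    have hσ' : Ext spaceship (Permits spaceship (softLookAhead (LNSsyn (Fin 4)))) σ := hσ
    have hmem := hmem25 σ hσ'
    have ht : termB pbSoft σ = true := by
      rw [termB, List.all_eq_true]
      intro c _
      rw [Bool.not_eq_true']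
      cases hb : pbSoft σ c with
      | false => rfl
      | true => exact absurd (Ext.snoc hσ' ((pbSoft_correct _ _).1 hb)) (hterm c)
    exact (exB_iff σ).1 (dec3 σ hmem ht)
  · -- part 4
    ext σ
    constructor
    · intro hσ
      have h : Ext spaceship
          (Permits spaceship (hardLookAhead (softLookAhead (LNSsyn (Fin 4))))) σ := hσ
      clear hσ
      show Ext spaceship (Permits spaceship (softLookAhead (LNSsyn (Fin 4)))) σ
      induction h with
      | nil => exact Ext.nil
      | snoc hσ' hc ih => exact Ext.snoc ih (permits_hard_le hc)
    · intro hσ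
      have h : Ext spaceship (Permits spaceship (softLookAhead (LNSsyn (Fin 4)))) σ := hσ
      show Ext spaceship
        (Permits spaceship (hardLookAhead (softLookAhead (LNSsyn (Fin 4))))) σ
      have key : Ext spaceship
          (Permits spaceship (hardLookAhead (softLookAhead (LNSsyn (Fin 4))))) σ ∧
          σ ∈ L25 := by
        clear hσ
        induction h with
        | nil => exact ⟨Ext.nil, by decide⟩
        | @snoc σ' c hσ' hc ih =>
            exact ⟨Ext.snoc ih.1 ((pbHardSoft_correct _ _).1
                (dec2 _ ih.2 _ (mem_allP4 _) ((pbSoft_correct _ _).2 hc))),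
              dec1 _ ih.2 _ (mem_allP4 _) ((pbSoft_correct _ _).2 hc)⟩
      exact key.1

end Gossip
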